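/- Let G be a Lie algebra over a field K of characteristic zero and let J be an ideal of G such that: (i) the quotient Lie algebra G/J is finite-dimensional and nilpotent; (ii) J is a nilpotent Lie algebra; (iii) every element a ∈ G acts nilpotently on J, i.e., there is a natural number m = m(a) with (ad a)^m(J) = 0. Then G is a nilpotent Lie algebra. -/

import Mathlib

open LieModule LieSubmodule

section aux
variable {K : Type*} [Field K] {G : Type*} [LieRing G] [LieAlgebra K G]

theorem aux_nilpotent_module (J : LieIdeal K G) [FiniteDimensional K (G ⧸ J)]
    (M : Type*) [AddCommGroup M] [Module K M] [LieRingModule G M] [LieModule K G M]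
    (htriv : ∀ x ∈ J, ∀ m : M, ⁅x, m⁆ = 0)
    (hnil : ∀ a : G, IsNilpotent (LieModule.toEnd K G M a)) :
    LieModule.IsNilpotent G M := by
  -- linear map (G⧸J) → End M
  have hker : (J : Submodule K G) ≤ LinearMap.ker (LieModule.toEnd K G M : G →ₗ[K] Module.End K M) := by
    intro x hx
    simp only [LinearMap.mem_ker]
    ext m
    exact htriv x hx m
  let φ : (G ⧸ J) →ₗ[K] Module.End K M :=
    Submodule.liftQ (J : Submodule K G) (LieModule.toEnd K G M : G →ₗ[K] Module.End K M) hker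
  have hφ : ∀ (x : G) (m : M), φ (LieSubmodule.Quotient.mk' J x) m = ⁅x, m⁆ := fun x m => rfl
  letI : Bracket (G ⧸ J) M := ⟨fun q m => φ q m⟩
  have hbr : ∀ (x : G) (m : M), ⁅(LieSubmodule.Quotient.mk' J x : G ⧸ J), m⁆ = ⁅x, m⁆ :=
    fun x m => rfl
  have hsurj : Function.Surjective (LieSubmodule.Quotient.mk' J) :=
    LieSubmodule.Quotient.surjective_mk' J
  letI : LieRingModule (G ⧸ J) M :=
    { add_lie := fun q q' m => by show φ (q + q') m = φ q m + φ q' m; simp only [Bracket.bracket, map_add, LinearMap.add_apply]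
      lie_add := fun q m m' => by show φ q (m + m') = φ q m + φ q m'; simp only [Bracket.bracket, map_add]
      leibniz_lie := fun q q' m => by
        obtain ⟨x, rfl⟩ := hsurj q
        obtain ⟨y, rfl⟩ := hsurj q'
        have : (⁅(LieSubmodule.Quotient.mk' J x : G ⧸ J), (LieSubmodule.Quotient.mk' J y : G ⧸ J)⁆ : G ⧸ J)
            = LieSubmodule.Quotient.mk' J ⁅x, y⁆ :=
          (LieSubmodule.Quotient.mk_bracket (I := J) x y).symm
        rw [this, hbr, hbr, hbr, hbr, hbr]
        exact leibniz_lie x y m }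
  letI : LieModule K (G ⧸ J) M :=
    { smul_lie := fun t q m => by
        show φ (t • q) m = t • φ q m; simp only [Bracket.bracket, map_smul, LinearMap.smul_apply]
      lie_smul := fun t q m => by show φ q (t • m) = t • φ q m; simp only [Bracket.bracket, map_smul] }
  have hnil' : ∀ q : G ⧸ J, IsNilpotent (LieModule.toEnd K (G ⧸ J) M q) := by
    intro q
    obtain ⟨x, rfl⟩ := hsurj q
    have : LieModule.toEnd K (G ⧸ J) M (LieSubmodule.Quotient.mk' J x)
        = LieModule.toEnd K G M x := by
      ext m; exact hbr x m
    rw [this]; exact hnil x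
  have hE : LieAlgebra.IsEngelian K (G ⧸ J) := LieAlgebra.isEngelian_of_isNoetherian
  have hN : LieModule.IsNilpotent (G ⧸ J) M := hE M hnil'
  -- transfer back to G
  let f : G →ₗ⁅K⁆ G ⧸ J :=
    { (LieSubmodule.Quotient.mk' J).toLinearMap with
      map_lie' := fun {x y} => (LieSubmodule.Quotient.mk_bracket (I := J) x y).symm }
  have hf : Function.Surjective f := hsurj
  have hg : Function.Surjective (LinearMap.id : M →ₗ[K] M) := fun m => ⟨m, rfl⟩
  have hfg : ∀ (x : G) (m : M), ⁅f x, (LinearMap.id : M →ₗ[K] M) m⁆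
      = (LinearMap.id : M →ₗ[K] M) ⁅x, m⁆ := fun x m => hbr x m
  obtain ⟨k, hk⟩ := (LieModule.isNilpotent_iff K (G ⧸ J) M).mp hN
  refine (LieModule.isNilpotent_iff K G M).mpr ⟨k, ?_⟩
  have := hf.lieModule_lcs_map_eq hfg hg k
  rw [hk] at this
  rw [← LieSubmodule.toSubmodule_inj]
  simpa using this

theorem toEnd_pow_comm {K : Type*} [Field K] {G : Type*} [LieRing G] [LieAlgebra K G]
    {M M₂ : Type*} [AddCommGroup M] [Module K M] [LieRingModule G M] [LieModule K G M]
    [AddCommGroup M₂] [Module K M₂] [LieRingModule G M₂] [LieModule K G M₂]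
    (f : M →ₗ⁅K,G⁆ M₂) (x : G) (j : ℕ) (m : M) :
    f ((LieModule.toEnd K G M x ^ j) m) = (LieModule.toEnd K G M₂ x ^ j) (f m) := by
  induction j with
  | zero => simp
  | succ j ih =>
    rw [pow_succ', pow_succ']
    simp only [Module.End.mul_apply, LieModule.toEnd_apply_apply]
    rw [f.map_lie, ih]

theorem lcs_mono' {K : Type*} [Field K] {G : Type*} [LieRing G] [LieAlgebra K G]
    {M : Type*} [AddCommGroup M] [Module K M] [LieRingModule G M]
    {N N' : LieSubmodule K G M} (h : N ≤ N') (m : ℕ) : N.lcs m ≤ N'.lcs m := by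
  induction m with
  | zero => simpa
  | succ m ih =>
    rw [LieSubmodule.lcs_succ, LieSubmodule.lcs_succ]
    exact LieSubmodule.mono_lie_right _ ih

end aux

/-- Let `G` be a Lie algebra over a field `K` of characteristic zero and
`J` an ideal of `G` such that: (i) `G/J` is a finite-dimensional nilpotent Lie algebra;
(ii) `J` is a nilpotent Lie algebra; (iii) every `a ∈ G` acts nilpotently on `J`.
Then `G` is a nilpotent Lie algebra. -/
theorem lie_nilpotent_of_quotient_and_ideal
    (K : Type*) [Field K] [CharZero K] (G : Type*) [LieRing G] [LieAlgebra K G]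
    (J : LieIdeal K G)
    (h1 : FiniteDimensional K (G ⧸ J))
    (h2 : LieRing.IsNilpotent (G ⧸ J))
    (h3 : LieRing.IsNilpotent ↥J)
    (h4 : ∀ a : G, ∃ m : ℕ, ∀ b ∈ J, ((LieAlgebra.ad K G a) ^ m) b = 0) :
    LieRing.IsNilpotent G := by
  classical
  -- the lower central series of `J`, as ideals of `G`
  let C : ℕ → LieIdeal K G := fun k => Nat.rec J (fun _ Ck => ⁅J, Ck⁆) k
  have hC0 : C 0 = J := rfl
  have hCsucc : ∀ k, C (k + 1) = ⁅J, C k⁆ := fun k => rfl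
  have hCle : ∀ k, C k ≤ J := by
    intro k
    cases k with
    | zero => exact le_rfl
    | succ k => rw [hCsucc]; exact LieSubmodule.lie_le_left _ _
  -- `C` reaches `⊥` because `J` is nilpotent
  have hCbot : ∃ k, C k = ⊥ := by
    obtain ⟨k, hk⟩ := (LieModule.isNilpotent_iff K ↥J ↥J).mp h3
    refine ⟨k, ?_⟩
    have key : ∀ k, LieSubmodule.toSubmodule (C k) ≤
        Submodule.map (LieSubmodule.toSubmodule J).subtype
          (LieSubmodule.toSubmodule (LieModule.lowerCentralSeries K ↥J ↥J k)) := by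
      intro k
      induction k with
      | zero =>
        intro x hx
        exact ⟨⟨x, hx⟩, by simp, rfl⟩
      | succ k ih =>
        rw [hCsucc, LieSubmodule.lieIdeal_oper_eq_linear_span']
        rw [Submodule.span_le]
        rintro m ⟨x, hx, n, hn, rfl⟩
        have hn' := ih hn
        obtain ⟨n', hn', rfl⟩ := hn'
        refine ⟨⁅(⟨x, hx⟩ : ↥J), n'⁆, ?_, rfl⟩
        rw [LieModule.lowerCentralSeries_succ]
        exact LieSubmodule.lie_mem_lie (LieSubmodule.mem_top _) hn'
    have hle : LieSubmodule.toSubmodule (C k) ≤ ⊥ := by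
      have h := key k
      rwa [hk, LieSubmodule.bot_toSubmodule, Submodule.map_bot] at h
    rw [← LieSubmodule.toSubmodule_inj, LieSubmodule.bot_toSubmodule, ← le_bot_iff]
    exact hle
  -- base : lcs of G eventually inside J
  have hbase : ∃ n, LieModule.lowerCentralSeries K G G n ≤ J := by
    have hq : LieModule.IsNilpotent G (G ⧸ J) := by
      obtain ⟨k, hk⟩ := (LieModule.isNilpotent_iff K (G ⧸ J) (G ⧸ J)).mp h2
      refine (LieModule.isNilpotent_iff K G (G ⧸ J)).mpr ⟨k, ?_⟩
      rw [← LieSubmodule.toSubmodule_inj,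
        coe_lowerCentralSeries_ideal_quot_eq, hk]
      simp
    exact (LieModule.isNilpotent_quotient_iff K G G J).mp hq
  -- inductive step
  have hstep : ∀ k n, LieModule.lowerCentralSeries K G G n ≤ C k →
      ∃ n', LieModule.lowerCentralSeries K G G n' ≤ C (k + 1) := by
    intro k n hn
    set B : LieIdeal K G := C (k + 1) with hB
    let A' : LieSubmodule K G (G ⧸ B) := LieSubmodule.map (LieSubmodule.Quotient.mk' B) (C k)
    have htriv : ∀ x ∈ J, ∀ m : ↥A', ⁅x, m⁆ = 0 := by
      intro x hx m
      obtain ⟨a, ha, hma⟩ := (LieSubmodule.mem_map _).mp m.2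
      apply Subtype.ext
      rw [LieSubmodule.coe_bracket]
      show ⁅x, (m : G ⧸ B)⁆ = (0 : G ⧸ B)
      rw [← hma, ← LieModuleHom.map_lie, LieSubmodule.Quotient.mk_eq_zero]
      rw [hB, hCsucc]
      exact LieSubmodule.lie_mem_lie hx ha
    have hnil : ∀ a : G, IsNilpotent (LieModule.toEnd K G ↥A' a) := by
      intro a
      obtain ⟨m, hm⟩ := h4 a
      refine ⟨m, ?_⟩
      ext x
      obtain ⟨b, hb, hxb⟩ := (LieSubmodule.mem_map _).mp x.2
      have h1' := toEnd_pow_comm A'.incl a m x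
      simp only [LieSubmodule.incl_apply] at h1'
      have h2' := toEnd_pow_comm (LieSubmodule.Quotient.mk' B) a m b
      have hz : (LieModule.toEnd K G G a ^ m) b = 0 := hm b (hCle k hb)
      show (((LieModule.toEnd K G ↥A' a ^ m) x : ↥A') : G ⧸ B)
          = (((0 : Module.End K ↥A') x : ↥A') : G ⧸ B)
      rw [h1', ← hxb, ← h2', hz]
      simp
    have hNA : LieModule.IsNilpotent G ↥A' := aux_nilpotent_module J ↥A' htriv hnil
    obtain ⟨m, hm0⟩ := (LieModule.isNilpotent_iff K G ↥A').mp hNA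
    have hA'lcs : A'.lcs m = ⊥ := by
      rw [← LieSubmodule.lowerCentralSeries_map_eq_lcs, hm0]
      rw [_root_.eq_bot_iff]
      intro q hq
      obtain ⟨y, hy, hyq⟩ := (LieSubmodule.mem_map _).mp hq
      simp only [LieSubmodule.mem_bot] at hy
      rw [← hyq, hy]
      simp
    have hmapcomm : ∀ j,
        LieSubmodule.map (LieSubmodule.Quotient.mk' B) (LieSubmodule.lcs j (C k)) = LieSubmodule.lcs j A' := by
      intro j
      induction j with
      | zero => rfl
      | succ j ih =>
        rw [LieSubmodule.lcs_succ, LieSubmodule.lcs_succ,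
          LieSubmodule.map_bracket_eq, ih]
    have hlcsB : LieSubmodule.lcs m (C k) ≤ B :=
      (LieSubmodule.Quotient.map_mk'_eq_bot_le _ _).mp (by rw [hmapcomm m, hA'lcs])
    refine ⟨m + n, ?_⟩
    have hiter : LieModule.lowerCentralSeries K G G (m + n)
        = LieSubmodule.lcs m (LieModule.lowerCentralSeries K G G n) :=
      Function.iterate_add_apply _ m n ⊤
    rw [hiter]
    exact le_trans (lcs_mono' hn m) hlcsB
  -- assemble
  obtain ⟨k0, hk0⟩ := hCbot
  have hall : ∀ k, ∃ n, LieModule.lowerCentralSeries K G G n ≤ C k := by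
    intro k
    induction k with
    | zero => exact hbase
    | succ k ih =>
      obtain ⟨n, hn⟩ := ih
      exact hstep k n hn
  obtain ⟨n, hn⟩ := hall k0
  exact (LieModule.isNilpotent_iff K G G).mpr ⟨n, le_bot_iff.mp (hk0 ▸ hn)⟩
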